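/- Let μ be a σ-finite measure on a measurable space X and let p, q : X → [0,∞) be measurable probability density functions with respect to μ, i.e. ∫ p dμ = ∫ q dμ = 1. Then the squared Hellinger distance between p and the mixture (p+q)/2 satisfies (1/2) ∫_X ( √(p(x)) − √((p(x)+q(x))/2) )² dμ(x) ≤ 1 − 1/√2. -/

import Mathlib

open MeasureTheory
open scoped ENNReal

lemma hellinger_pointwise (a b : ℝ) (ha : 0 ≤ a) (hb : 0 ≤ b) :
    (Real.sqrt a - Real.sqrt ((a + b) / 2)) ^ 2 ≤ (3/2 - Real.sqrt 2) * a + (1/2) * b := by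
  have h1 : Real.sqrt a ^ 2 = a := Real.sq_sqrt ha
  have h2 : Real.sqrt ((a + b) / 2) ^ 2 = (a + b) / 2 := Real.sq_sqrt (by positivity)
  have h3 : Real.sqrt (a / 2) ≤ Real.sqrt ((a + b) / 2) := by
    apply Real.sqrt_le_sqrt; linarith
  have h4 : Real.sqrt (a / 2) = Real.sqrt a / Real.sqrt 2 := by
    rw [Real.sqrt_div' a (by norm_num)]
  have h5 : Real.sqrt 2 * Real.sqrt (a / 2) = Real.sqrt a := by
    rw [h4]
    field_simp
  have h6 : Real.sqrt 2 ^ 2 = 2 := Real.sq_sqrt (by norm_num)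
  have h7 : 0 ≤ Real.sqrt a := Real.sqrt_nonneg a
  have h8 : 0 ≤ Real.sqrt 2 := Real.sqrt_nonneg 2
  have h9 : Real.sqrt 2 * Real.sqrt a ≤ 2 * Real.sqrt ((a + b) / 2) := by
    calc Real.sqrt 2 * Real.sqrt a = Real.sqrt 2 * (Real.sqrt 2 * Real.sqrt (a/2)) := by rw [h5]
    _ = 2 * Real.sqrt (a/2) := by
        rw [← mul_assoc, Real.mul_self_sqrt (by norm_num : (0:ℝ) ≤ 2)]
    _ ≤ 2 * Real.sqrt ((a+b)/2) := by linarith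
  nlinarith [mul_nonneg h7 (Real.sqrt_nonneg ((a+b)/2)), mul_le_mul_of_nonneg_left h9 h7]

theorem squared_hellinger_to_mixture_le {X : Type*} [MeasurableSpace X]
    (μ : Measure X) [SigmaFinite μ]
    (p q : X → ℝ) (hpm : Measurable p) (hqm : Measurable q)
    (hp0 : ∀ x, 0 ≤ p x) (hq0 : ∀ x, 0 ≤ q x)
    (hp1 : ∫⁻ x, ENNReal.ofReal (p x) ∂μ = 1)
    (hq1 : ∫⁻ x, ENNReal.ofReal (q x) ∂μ = 1) :
    (1 / 2 : ℝ≥0∞) *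
        ∫⁻ x, ENNReal.ofReal ((Real.sqrt (p x) - Real.sqrt ((p x + q x) / 2)) ^ 2) ∂μ
      ≤ ENNReal.ofReal (1 - 1 / Real.sqrt 2) := by
  have hc : (0:ℝ) ≤ 3/2 - Real.sqrt 2 := by
    nlinarith [Real.sq_sqrt (show (0:ℝ) ≤ 2 by norm_num), Real.sqrt_nonneg 2]
  have key : ∫⁻ x, ENNReal.ofReal ((Real.sqrt (p x) - Real.sqrt ((p x + q x) / 2)) ^ 2) ∂μ
      ≤ ENNReal.ofReal (3/2 - Real.sqrt 2) * (∫⁻ x, ENNReal.ofReal (p x) ∂μ)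
        + ENNReal.ofReal (1/2) * (∫⁻ x, ENNReal.ofReal (q x) ∂μ) := by
    rw [← lintegral_const_mul _ hpm.ennreal_ofReal,
      ← lintegral_const_mul _ hqm.ennreal_ofReal,
      ← lintegral_add_left ((hpm.ennreal_ofReal.const_mul _)) ]
    apply lintegral_mono
    intro x
    calc ENNReal.ofReal ((Real.sqrt (p x) - Real.sqrt ((p x + q x) / 2)) ^ 2)
        ≤ ENNReal.ofReal ((3/2 - Real.sqrt 2) * p x + (1/2) * q x) :=
          ENNReal.ofReal_le_ofReal (hellinger_pointwise _ _ (hp0 x) (hq0 x))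
      _ = ENNReal.ofReal (3/2 - Real.sqrt 2) * ENNReal.ofReal (p x)
            + ENNReal.ofReal (1/2) * ENNReal.ofReal (q x) := by
          rw [ENNReal.ofReal_add (mul_nonneg hc (hp0 x)) (mul_nonneg (by norm_num) (hq0 x)),
            ENNReal.ofReal_mul hc, ENNReal.ofReal_mul (by norm_num)]
  calc (1 / 2 : ℝ≥0∞) *
        ∫⁻ x, ENNReal.ofReal ((Real.sqrt (p x) - Real.sqrt ((p x + q x) / 2)) ^ 2) ∂μ
      ≤ (1/2 : ℝ≥0∞) * (ENNReal.ofReal (3/2 - Real.sqrt 2) * 1 + ENNReal.ofReal (1/2) * 1) := by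
        rw [hp1, hq1] at key; exact mul_le_mul_right key _
    _ = ENNReal.ofReal (1 - 1 / Real.sqrt 2) := by
        rw [mul_one, mul_one, ← ENNReal.ofReal_add hc (by norm_num)]
        have : (1/2 : ℝ≥0∞) = ENNReal.ofReal (1/2) := by
          rw [ENNReal.ofReal_div_of_pos] <;> norm_num
        rw [this, ← ENNReal.ofReal_mul (by norm_num)]
        congr 1
        have h6 : Real.sqrt 2 * Real.sqrt 2 = 2 := Real.mul_self_sqrt (by norm_num)
        have h8 : (0:ℝ) < Real.sqrt 2 := Real.sqrt_pos.mpr (by norm_num)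
        field_simp
        nlinarith
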